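/- Tail-integral bound for truncated inverse moments: let λ, λ₀, b, K, q > 0 with K > 1, let Y be a nonnegative random variable with λ ≥ λ₀ − Y almost surely, E[ (√T · Y)^q ] ≤ M for some T > 0, and suppose b ≤ λ₀/4 and 1 ≤ b^{-K}. Then E[ λ^{-K} 1{λ ≥ b} ] ≤ 1 + ∫_1^{b^{-K}} P[ λ ≤ x^{-1/K} ] dx ≤ 1 + C (1 + M T^{-q/2} b^{-q-K}) for a constant C depending only on K, q, λ₀. -/

import Mathlib

open MeasureTheory Set

/-- Tail-integral bound for truncated inverse moments: for constants `K > 1`, `q > 0`,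
`λ₀ > 0` there is a constant `C > 0` (depending only on `K, q, λ₀`) such that for every
probability space, every nonnegative random variable `lam` and nonnegative random variable
`Y` with `lam ≥ λ₀ − Y` a.s., every `T > 0` with `E[(√T · Y)^q] ≤ M`, and every
`0 < b ≤ λ₀ / 4` with `b^{-K} ≥ 1`, one has
`E[lam^{-K} 1{lam ≥ b}] ≤ 1 + ∫_1^{b^{-K}} P[lam ≤ x^{-1/K}] dx
  ≤ 1 + C (1 + M T^{-q/2} b^{-q-K})`. -/
theorem truncated_inverse_moment_tail_bound
    (K q lam0 : ℝ) (hK : 1 < K) (hq : 0 < q) (hlam0 : 0 < lam0) :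
    ∃ C : ℝ, 0 < C ∧
      ∀ (Ω : Type) (_ : MeasurableSpace Ω) (μ : Measure Ω), IsProbabilityMeasure μ →
      ∀ (lam Y : Ω → ℝ), Measurable lam → Measurable Y →
        (∀ ω, 0 ≤ lam ω) → (∀ ω, 0 ≤ Y ω) →
        (∀ᵐ ω ∂μ, lam0 - Y ω ≤ lam ω) →
      ∀ (T M b : ℝ), 0 < T → 0 ≤ M →
        (∫⁻ ω, ENNReal.ofReal ((Real.sqrt T * Y ω) ^ q) ∂μ ≤ ENNReal.ofReal M) →
        0 < b → b ≤ lam0 / 4 → 1 ≤ b ^ (-K) →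
      (∫⁻ ω, ENNReal.ofReal ((lam ω ^ (-K)) * Set.indicator {ω' | b ≤ lam ω'} 1 ω) ∂μ
          ≤ 1 + ∫⁻ x in Ioc (1 : ℝ) (b ^ (-K)), μ {ω | lam ω ≤ x ^ (-(1 : ℝ) / K)}) ∧
      (1 + ∫⁻ x in Ioc (1 : ℝ) (b ^ (-K)), μ {ω | lam ω ≤ x ^ (-(1 : ℝ) / K)}
          ≤ 1 + ENNReal.ofReal (C * (1 + M * T ^ (-q / 2) * b ^ (-q - K)))) := by
  have hKpos : (0:ℝ) < K := lt_trans one_pos hK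
  have hKne : K ≠ 0 := ne_of_gt hKpos
  set A : ℝ := max 1 ((2 / lam0) ^ K) with hA
  have hApos : 0 < A := lt_of_lt_of_le one_pos (le_max_left _ _)
  have h2l0 : (0:ℝ) < 2 / lam0 := by positivity
  refine ⟨A + (2 / lam0) ^ q, by positivity, ?_⟩
  intro Ω mΩ μ hμ lam Y hlam hY hlamnn hYnn hae T M b hT hM hMoment hb hb4 hbK
  set B : ℝ := b ^ (-K) with hB
  have hb1 : b ≤ 1 := by
    by_contra h
    push_neg at h
    exact absurd hbK (not_le.mpr (Real.rpow_lt_one_of_one_lt_of_neg h (by linarith)))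
  have hBnn : (0:ℝ) ≤ B := Real.rpow_nonneg hb.le _
  -- the tail set function
  set g : Ω → ℝ := fun ω => (lam ω ^ (-K)) * Set.indicator {ω' | b ≤ lam ω'} 1 ω with hg
  have hgnn : ∀ ω, 0 ≤ g ω := by
    intro ω
    apply mul_nonneg (Real.rpow_nonneg (hlamnn ω) _)
    exact Set.indicator_nonneg (fun _ _ => zero_le_one) ω
  have hgmble : Measurable g := by
    apply Measurable.mul
    · measurability
    · exact Measurable.indicator measurable_const (measurableSet_le measurable_const hlam)
  have hgB : ∀ ω, g ω ≤ B := by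
    intro ω
    by_cases hωb : b ≤ lam ω
    · have : Set.indicator {ω' | b ≤ lam ω'} (1 : Ω → ℝ) ω = 1 :=
        Set.indicator_of_mem (show ω ∈ {ω' | b ≤ lam ω'} from hωb) _
      rw [hg]
      simp only [this, mul_one]
      exact Real.rpow_le_rpow_of_nonpos hb hωb (by linarith)
    · have : Set.indicator {ω' | b ≤ lam ω'} (1 : Ω → ℝ) ω = 0 :=
        Set.indicator_of_notMem (show ω ∉ {ω' | b ≤ lam ω'} from hωb) _
      rw [hg]
      simp only [this, mul_zero]
      exact hBnn
  -- part 1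
  have part1 : ∫⁻ ω, ENNReal.ofReal (g ω) ∂μ
      ≤ 1 + ∫⁻ x in Ioc (1 : ℝ) B, μ {ω | lam ω ≤ x ^ (-(1 : ℝ) / K)} := by
    rw [lintegral_eq_lintegral_meas_lt μ (ae_of_all _ hgnn) hgmble.aemeasurable]
    have hsplit1 : (Ioi (0:ℝ)) = Ioc 0 1 ∪ Ioi 1 := (Ioc_union_Ioi_eq_Ioi zero_le_one).symm
    have hsplit2 : (Ioi (1:ℝ)) = Ioc 1 B ∪ Ioi B := (Ioc_union_Ioi_eq_Ioi hbK).symm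
    rw [hsplit1, lintegral_union measurableSet_Ioi (Ioc_disjoint_Ioi le_rfl),
      hsplit2, lintegral_union measurableSet_Ioi (Ioc_disjoint_Ioi le_rfl)]
    have h01 : ∫⁻ t in Ioc (0:ℝ) 1, μ {a | t < g a} ≤ 1 := by
      calc ∫⁻ t in Ioc (0:ℝ) 1, μ {a | t < g a}
          ≤ ∫⁻ _ in Ioc (0:ℝ) 1, 1 := lintegral_mono fun t => prob_le_one
        _ = 1 := by rw [setLIntegral_const, one_mul, Real.volume_Ioc]; norm_num
    have hBi : ∫⁻ t in Ioi B, μ {a | t < g a} = 0 := by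
      rw [setLIntegral_congr_fun measurableSet_Ioi
        (fun t (ht : B < t) => ?_), lintegral_zero]
      have : {a | t < g a} = ∅ := by
        ext a
        simp only [Set.mem_setOf_eq, Set.mem_empty_iff_false, iff_false, not_lt]
        exact le_trans (hgB a) ht.le
      rw [this, measure_empty]
    have h1B : ∫⁻ t in Ioc (1:ℝ) B, μ {a | t < g a}
        ≤ ∫⁻ x in Ioc (1 : ℝ) B, μ {ω | lam ω ≤ x ^ (-(1 : ℝ) / K)} := by
      refine lintegral_mono_ae ?_
      filter_upwards [ae_restrict_mem measurableSet_Ioc] with t ht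
      apply measure_mono
      intro ω (hω : t < g ω)
      have ht0 : 0 < t := lt_trans one_pos ht.1
      by_cases hωb : b ≤ lam ω
      · have hind : Set.indicator {ω' | b ≤ lam ω'} (1 : Ω → ℝ) ω = 1 :=
          Set.indicator_of_mem (show ω ∈ {ω' | b ≤ lam ω'} from hωb) _
        have hω' : t < lam ω ^ (-K) := by rw [hg] at hω; simpa [hind] using hω
        have := Real.rpow_lt_rpow_of_neg ht0 hω' (show -(1:ℝ)/K < 0 by
          rw [neg_div]; exact neg_neg_of_pos (by positivity))
        have heq : (lam ω ^ (-K)) ^ (-(1:ℝ)/K) = lam ω := by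
          rw [← Real.rpow_mul (hlamnn ω)]
          rw [show (-K) * (-(1:ℝ)/K) = 1 by field_simp]
          exact Real.rpow_one _
        rw [heq] at this
        exact le_of_lt this
      · have hind : Set.indicator {ω' | b ≤ lam ω'} (1 : Ω → ℝ) ω = 0 :=
          Set.indicator_of_notMem (show ω ∉ {ω' | b ≤ lam ω'} from hωb) _
        rw [hg] at hω
        simp [hind] at hω
        linarith
    rw [hBi, add_zero]
    exact add_le_add h01 h1B
  -- part 2
  set c : ℝ := M * T ^ (-q / 2) * (2 / lam0) ^ q with hc
  have hcnn : 0 ≤ c := by positivity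
  -- Markov bound
  have hMarkov : μ {ω | lam0 / 2 ≤ Y ω} ≤ ENNReal.ofReal c := by
    set ε : ℝ := (Real.sqrt T * (lam0 / 2)) ^ q with hε
    have hεpos : 0 < ε := by positivity
    have hsub : {ω | lam0 / 2 ≤ Y ω}
        ⊆ {ω | ENNReal.ofReal ε ≤ ENNReal.ofReal ((Real.sqrt T * Y ω) ^ q)} := by
      intro ω (hω : lam0 / 2 ≤ Y ω)
      have : ε ≤ (Real.sqrt T * Y ω) ^ q := by
        apply Real.rpow_le_rpow (by positivity) _ hq.le
        have := Real.sqrt_nonneg T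
        nlinarith
      exact ENNReal.ofReal_le_ofReal this
    have hkey := mul_meas_ge_le_lintegral
      (μ := μ) (f := fun ω => ENNReal.ofReal ((Real.sqrt T * Y ω) ^ q))
      (by fun_prop) (ENNReal.ofReal ε)
    have h1 : ENNReal.ofReal ε * μ {ω | lam0 / 2 ≤ Y ω} ≤ ENNReal.ofReal M :=
      le_trans (le_trans (mul_le_mul_right (measure_mono hsub) _) hkey) hMoment
    have h2 : μ {ω | lam0 / 2 ≤ Y ω} ≤ ENNReal.ofReal M / ENNReal.ofReal ε := by
      rw [ENNReal.le_div_iff_mul_le (Or.inl (by simp [hεpos])) (Or.inl ENNReal.ofReal_ne_top)]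
      rwa [mul_comm]
    refine le_trans h2 (le_of_eq ?_)
    rw [← ENNReal.ofReal_div_of_pos hεpos]
    congr 1
    rw [hε, hc, Real.mul_rpow (Real.sqrt_nonneg T) (by positivity),
      Real.sqrt_eq_rpow, ← Real.rpow_mul hT.le]
    rw [show (1:ℝ)/2 * q = q/2 by ring]
    rw [show (2 / lam0 : ℝ) = (lam0 / 2)⁻¹ by rw [inv_div]]
    rw [Real.inv_rpow (by positivity), show (-q/2 : ℝ) = -(q/2) by ring,
      Real.rpow_neg hT.le]
    field_simp
  -- pointwise bound on the integrand
  have hpoint : ∀ x ∈ Ioc (1:ℝ) B, μ {ω | lam ω ≤ x ^ (-(1 : ℝ) / K)}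
      ≤ (Ioc (1:ℝ) A).indicator (fun _ => (1:ENNReal)) x + ENNReal.ofReal c := by
    intro x hx
    by_cases hxA : x ≤ A
    · have : (Ioc (1:ℝ) A).indicator (fun _ => (1:ENNReal)) x = 1 :=
        Set.indicator_of_mem (show x ∈ Ioc (1:ℝ) A from ⟨hx.1, hxA⟩) _
      rw [this]
      exact le_trans prob_le_one le_self_add
    · push_neg at hxA
      have hxgt : (2 / lam0) ^ K < x := lt_of_le_of_lt (le_max_right _ _) hxA
      have hx0 : (0:ℝ) < (2/lam0) ^ K := by positivity
      have hxinv : x ^ (-(1:ℝ)/K) ≤ lam0 / 2 := by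
        have h := Real.rpow_le_rpow_of_nonpos hx0 hxgt.le
          (show -(1:ℝ)/K ≤ 0 by rw [neg_div]; exact neg_nonpos_of_nonneg (by positivity))
        have heq : ((2/lam0) ^ K) ^ (-(1:ℝ)/K) = lam0 / 2 := by
          rw [← Real.rpow_mul h2l0.le, show K * (-(1:ℝ)/K) = -1 by field_simp,
            Real.rpow_neg_one, inv_div]
        rwa [heq] at h
      have hss : μ {ω | lam ω ≤ x ^ (-(1 : ℝ) / K)} ≤ μ {ω | lam0 / 2 ≤ Y ω} := by
        apply measure_mono_ae
        filter_upwards [hae] with ω hω hmem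
        have : lam ω ≤ lam0 / 2 := le_trans hmem hxinv
        show lam0 / 2 ≤ Y ω
        linarith
      exact le_trans (le_trans hss hMarkov) le_add_self
  -- integrate the pointwise bound
  have hint : ∫⁻ x in Ioc (1 : ℝ) B, μ {ω | lam ω ≤ x ^ (-(1 : ℝ) / K)}
      ≤ ENNReal.ofReal A + ENNReal.ofReal (c * B) := by
    calc ∫⁻ x in Ioc (1 : ℝ) B, μ {ω | lam ω ≤ x ^ (-(1 : ℝ) / K)}
        ≤ ∫⁻ x in Ioc (1 : ℝ) B,
            ((Ioc (1:ℝ) A).indicator (fun _ => (1:ENNReal)) x + ENNReal.ofReal c) := by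
          refine lintegral_mono_ae ?_
          filter_upwards [ae_restrict_mem measurableSet_Ioc] with x hx
          exact hpoint x hx
      _ = (∫⁻ x in Ioc (1 : ℝ) B, (Ioc (1:ℝ) A).indicator (fun _ => (1:ENNReal)) x)
            + ∫⁻ _ in Ioc (1 : ℝ) B, ENNReal.ofReal c := by
          rw [lintegral_add_right _ measurable_const]
      _ ≤ ENNReal.ofReal A + ENNReal.ofReal (c * B) := by
          gcongr
          · calc ∫⁻ x in Ioc (1 : ℝ) B, (Ioc (1:ℝ) A).indicator (fun _ => (1:ENNReal)) x
                ≤ ∫⁻ x, (Ioc (1:ℝ) A).indicator (fun _ => (1:ENNReal)) x :=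
                  setLIntegral_le_lintegral _ _
              _ = ∫⁻ _ in Ioc (1:ℝ) A, 1 := lintegral_indicator measurableSet_Ioc _
              _ = ENNReal.ofReal (A - 1) := by
                  rw [setLIntegral_const, one_mul, Real.volume_Ioc]
              _ ≤ ENNReal.ofReal A := ENNReal.ofReal_le_ofReal (by linarith)
          · rw [setLIntegral_const, Real.volume_Ioc, ← ENNReal.ofReal_mul hcnn]
            apply ENNReal.ofReal_le_ofReal
            have : B - 1 ≤ B := by linarith
            nlinarith
  -- final real arithmetic
  have hreal : A + c * B ≤ (A + (2 / lam0) ^ q) * (1 + M * T ^ (-q / 2) * b ^ (-q - K)) := by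
    have hbq : (1:ℝ) ≤ b ^ (-q) :=
      Real.one_le_rpow_of_pos_of_le_one_of_nonpos hb hb1 (by linarith)
    have hsplit : b ^ (-q - K) = b ^ (-q) * B := by
      rw [hB, show (-q - K) = (-q) + (-K) by ring, Real.rpow_add hb]
    have hs : c * B ≤ (2 / lam0) ^ q * (M * T ^ (-q / 2) * b ^ (-q - K)) := by
      rw [hsplit, hc]
      have h1 : B ≤ b ^ (-q) * B := le_mul_of_one_le_left hBnn hbq
      have h2 : 0 ≤ M * T ^ (-q/2) * (2/lam0) ^ q := by positivity
      nlinarith [Real.rpow_nonneg hT.le (-q/2), Real.rpow_nonneg h2l0.le q,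
        mul_le_mul_of_nonneg_left h1 h2]
    have hApos' : (0:ℝ) ≤ (2/lam0) ^ q := by positivity
    have hsnn : 0 ≤ M * T ^ (-q / 2) * b ^ (-q - K) := by positivity
    nlinarith
  refine ⟨part1, ?_⟩
  gcongr
  calc ∫⁻ x in Ioc (1 : ℝ) B, μ {ω | lam ω ≤ x ^ (-(1 : ℝ) / K)}
      ≤ ENNReal.ofReal A + ENNReal.ofReal (c * B) := hint
    _ = ENNReal.ofReal (A + c * B) := (ENNReal.ofReal_add hApos.le (by positivity)).symm
    _ ≤ _ := ENNReal.ofReal_le_ofReal hreal
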